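/- Fix d ≥ 2, θ ∈ (0, π/2), and an integer m with m ≤ 2(⌊(π/2 − θ)/θ⌋ + 1). Then for any nonzero vectors w'_1,…,w'_m ∈ ℝ^d there exist nonzero vectors w_1,…,w_m ∈ ℝ^d such that: (i) ρ(w_j, w_k) ≥ θ for all j ≠ k; (ii) ‖w_j‖₂ = ‖w'_j‖₂ for all j; and (iii) arccos(⟨w_j, w'_j⟩/(‖w_j‖₂ ‖w'_j‖₂)) ≤ θ' for all j, where θ' = min(3mθ, π). -/

import Mathlib

open RealInnerProductSpace

/-- The nonobtuse angle `ρ(u,v) = arccos(|⟨u,v⟩| / (‖u‖‖v‖))` between two vectors. -/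
noncomputable def rho {E : Type*} [NormedAddCommGroup E] [InnerProductSpace ℝ E]
    (u v : E) : ℝ :=
  Real.arccos (|⟪u, v⟫| / (‖u‖ * ‖v‖))

namespace Stmt17Aux

open Real

variable {E : Type*} [NormedAddCommGroup E] [InnerProductSpace ℝ E]

lemma rho_comm (u v : E) : rho u v = rho v u := by
  simp [rho, real_inner_comm v u, mul_comm]

lemma arccos_le_arccos' {x y : ℝ} (hxy : x ≤ y) :
    Real.arccos y ≤ Real.arccos x := by
  unfold Real.arccos
  have := Real.monotone_arcsin hxy
  linarith

lemma le_rho {θ : ℝ} (hθ0 : 0 ≤ θ) (hθπ : θ ≤ π)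
    {u v : E} (hu : u ≠ 0) (hv : v ≠ 0)
    (h : |⟪u, v⟫| ≤ Real.cos θ * (‖u‖ * ‖v‖)) : θ ≤ rho u v := by
  have hnorm : 0 < ‖u‖ * ‖v‖ := mul_pos (norm_pos_iff.2 hu) (norm_pos_iff.2 hv)
  have ht : |⟪u, v⟫| / (‖u‖ * ‖v‖) ≤ Real.cos θ := by
    rw [div_le_iff₀ hnorm]; linarith
  calc θ = Real.arccos (Real.cos θ) := (Real.arccos_cos hθ0 hθπ).symm
    _ ≤ rho u v := arccos_le_arccos' ht

lemma rho_smul_smul {c c' : ℝ} (hc : 0 < c) (hc' : 0 < c') (u v : E) :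
    rho (c • u) (c' • v) = rho u v := by
  unfold rho
  rw [real_inner_smul_left, real_inner_smul_right, norm_smul, norm_smul]
  congr 1
  rw [abs_mul, abs_mul, abs_of_pos hc, abs_of_pos hc']
  simp only [Real.norm_eq_abs, abs_of_pos hc, abs_of_pos hc']
  rcases eq_or_ne (‖u‖ * ‖v‖) 0 with h | h
  · rw [show c * ‖u‖ * (c' * ‖v‖) = (c * c') * (‖u‖ * ‖v‖) by ring, h, mul_zero, div_zero, div_zero]
  · rw [mul_ne_zero_iff] at h
    have hu : (0:ℝ) < ‖u‖ := lt_of_le_of_ne (norm_nonneg u) (Ne.symm h.1)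
    have hv : (0:ℝ) < ‖v‖ := lt_of_le_of_ne (norm_nonneg v) (Ne.symm h.2)
    rw [div_eq_div_iff (by positivity) (by positivity)]
    ring

section circ

variable {e f : E} (he : ‖e‖ = 1) (hf : ‖f‖ = 1) (hef : ⟪e, f⟫ = 0)

lemma inner_circ (α : ℝ) (v : E) :
    ⟪Real.cos α • e + Real.sin α • f, v⟫ = Real.cos α * ⟪e, v⟫ + Real.sin α * ⟪f, v⟫ := by
  rw [inner_add_left, real_inner_smul_left, real_inner_smul_left]

include he hf hef in
lemma inner_circ_circ (α β : ℝ) :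
    ⟪Real.cos α • e + Real.sin α • f, Real.cos β • e + Real.sin β • f⟫
      = Real.cos (α - β) := by
  have hee : ⟪e, e⟫ = (1 : ℝ) := by
    rw [real_inner_self_eq_norm_mul_norm, he]; norm_num
  have hff : ⟪f, f⟫ = (1 : ℝ) := by
    rw [real_inner_self_eq_norm_mul_norm, hf]; norm_num
  have hfe : ⟪f, e⟫ = (0 : ℝ) := by rw [real_inner_comm]; exact hef
  rw [inner_circ, inner_add_right, inner_add_right, real_inner_smul_right,
    real_inner_smul_right, real_inner_smul_right, real_inner_smul_right,
    hee, hff, hef, hfe, Real.cos_sub]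
  ring

include he hf hef in
lemma norm_circ (α : ℝ) : ‖Real.cos α • e + Real.sin α • f‖ = 1 := by
  have h := inner_circ_circ he hf hef α α
  rw [sub_self, Real.cos_zero, real_inner_self_eq_norm_mul_norm] at h
  nlinarith [norm_nonneg (Real.cos α • e + Real.sin α • f)]

include he hf hef in
lemma proj_le (v : E) : ⟪e, v⟫ ^ 2 + ⟪f, v⟫ ^ 2 ≤ ‖v‖ ^ 2 := by
  have hee : ⟪e, e⟫ = (1 : ℝ) := by
    rw [real_inner_self_eq_norm_mul_norm, he]; norm_num
  have hff : ⟪f, f⟫ = (1 : ℝ) := by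
    rw [real_inner_self_eq_norm_mul_norm, hf]; norm_num
  have hfe : ⟪f, e⟫ = (0 : ℝ) := by rw [real_inner_comm]; exact hef
  set a := ⟪e, v⟫
  set b := ⟪f, v⟫
  have hva : ⟪v, e⟫ = a := (real_inner_comm v e).symm
  have hvb : ⟪v, f⟫ = b := (real_inner_comm v f).symm
  have h0 : (0:ℝ) ≤ ⟪v - a • e - b • f, v - a • e - b • f⟫ := real_inner_self_nonneg
  have hexp : ⟪v - a • e - b • f, v - a • e - b • f⟫ = ‖v‖ ^ 2 - a ^ 2 - b ^ 2 := by
    have hvv : ⟪v, v⟫ = ‖v‖ ^ 2 := by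
      rw [real_inner_self_eq_norm_mul_norm]; ring
    simp only [inner_sub_left, inner_sub_right, real_inner_smul_left, real_inner_smul_right,
      hee, hff, hef, hfe, hva, hvb, hvv]
    ring
  rw [hexp] at h0
  linarith

end circ

lemma round_near {θ x : ℝ} (hθ0 : 0 < θ) (hθ2 : θ < π / 2)
    (h : Real.cos θ < |Real.cos x|) :
    |x - round (x / π) * π| < θ ∧ |((round (x / π) : ℤ) : ℝ) * π| ≤ |x| + π / 2 := by
  have hπ := Real.pi_pos
  set n := round (x / π) with hn
  have hy : |x - n * π| ≤ π / 2 := by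
    have h1 : |x / π - n| ≤ 1 / 2 := abs_sub_round (x / π)
    have h2 : x - n * π = (x / π - n) * π := by
      rw [sub_mul, div_mul_cancel₀ _ (ne_of_gt hπ)]
    rw [h2, abs_mul, abs_of_pos hπ]
    nlinarith
  set y := x - n * π with hy'
  have hcos : |Real.cos x| = Real.cos y := by
    have hxy : y + n * π = x := by rw [hy']; ring
    have : Real.cos x = Real.cos (y + n * π) := by rw [hxy]
    rw [this, Real.cos_add_int_mul_pi, abs_mul]
    have h1 : |((-1 : ℝ)) ^ n| = 1 := by
      rcases Int.even_or_odd n with hpar | hpar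
      · rw [hpar.neg_one_zpow]; norm_num
      · rw [hpar.neg_one_zpow]; norm_num
    rw [h1, one_mul]
    exact abs_of_nonneg (Real.cos_nonneg_of_mem_Icc
      ⟨by linarith [(abs_le.1 hy).1], (abs_le.1 hy).2⟩)
  rw [hcos] at h
  refine ⟨?_, ?_⟩
  · by_contra hcon
    push_neg at hcon
    have h1 : Real.cos y ≤ Real.cos |y| := by rw [Real.cos_abs]
    have h2 : Real.cos |y| ≤ Real.cos θ :=
      Real.cos_le_cos_of_nonneg_of_le_pi (le_of_lt hθ0) (by linarith [abs_le.1 hy]) hcon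
    linarith
  · have : |(n:ℝ) * π| ≤ |x| + |x - n * π| := by
      have := abs_sub_abs_le_abs_sub x ((n:ℝ)*π)
      have h3 : |(n:ℝ)*π| - |x| ≤ |x - n*π| := by
        have := abs_sub_abs_le_abs_sub ((n:ℝ)*π) x
        rw [abs_sub_comm] at this
        linarith
      linarith
    linarith [hy]

lemma exists_unit_orthogonal {d : ℕ} (hd : 2 ≤ d) (u : EuclideanSpace ℝ (Fin d)) :
    ∃ e : EuclideanSpace ℝ (Fin d), ‖e‖ = 1 ∧ ⟪u, e⟫ = 0 := by
  have hne : (ℝ ∙ u)ᗮ ≠ ⊥ := by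
    intro hbot
    have htop : (ℝ ∙ u) = ⊤ := Submodule.orthogonal_eq_bot_iff.mp hbot
    have h1 : Module.finrank ℝ (ℝ ∙ u : Submodule ℝ (EuclideanSpace ℝ (Fin d))) ≤ 1 := by
      have := finrank_span_le_card (R := ℝ) ({u} : Set (EuclideanSpace ℝ (Fin d)))
      simpa using this
    rw [htop, finrank_top] at h1
    have h2 : Module.finrank ℝ (EuclideanSpace ℝ (Fin d)) = d := by
      simp [finrank_euclideanSpace]
    omega
  obtain ⟨x, hx, hx0⟩ := Submodule.exists_mem_ne_zero_of_ne_bot hne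
  have hxn : (0:ℝ) < ‖x‖ := norm_pos_iff.2 hx0
  refine ⟨‖x‖⁻¹ • x, ?_, ?_⟩
  · rw [norm_smul, Real.norm_eq_abs, abs_of_pos (by positivity), inv_mul_cancel₀ (ne_of_gt hxn)]
  · rw [real_inner_smul_right]
    have : ⟪u, x⟫ = 0 := by
      exact (Submodule.mem_orthogonal _ x).mp hx u (Submodule.mem_span_singleton_self u)
    rw [this, mul_zero]

set_option maxHeartbeats 1000000 in
lemma step {d : ℕ} (hd : 2 ≤ d) {θ : ℝ} (hθ0 : 0 < θ) (hθ2 : θ < π / 2)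
    {m : ℕ} (h3m : 3 * m * θ ≤ π) {n : ℕ} (hn : n < m)
    (u' : EuclideanSpace ℝ (Fin d)) (hu' : u' ≠ 0)
    (v : Fin n → EuclideanSpace ℝ (Fin d)) (hv : ∀ k, v k ≠ 0) :
    ∃ w : EuclideanSpace ℝ (Fin d), w ≠ 0 ∧ ‖w‖ = ‖u'‖ ∧
      (∀ k, θ ≤ rho w (v k)) ∧
      Real.arccos (⟪w, u'⟫ / (‖w‖ * ‖u'‖)) ≤ 3 * m * θ := by
  have hπ := Real.pi_pos
  have hu'n : (0:ℝ) < ‖u'‖ := norm_pos_iff.2 hu'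
  set u : EuclideanSpace ℝ (Fin d) := ‖u'‖⁻¹ • u' with hu_def
  have hu1 : ‖u‖ = 1 := by
    rw [hu_def, norm_smul, Real.norm_eq_abs, abs_of_pos (by positivity),
      inv_mul_cancel₀ (ne_of_gt hu'n)]
  obtain ⟨e, he1, hue⟩ := exists_unit_orthogonal hd u
  set K : ℕ := 3 * m / 2 with hK
  set I : Finset ℤ := Finset.Icc (-(K:ℤ)) (K:ℤ) with hI
  have hIcard : I.card = 2 * K + 1 := by
    rw [hI, Int.card_Icc]
    omega
  set c : ℤ → EuclideanSpace ℝ (Fin d) :=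
    fun i => Real.cos (2*θ*i) • u + Real.sin (2*θ*i) • e with hc
  have hcnorm : ∀ i, ‖c i‖ = 1 := fun i => norm_circ hu1 he1 hue _
  have hphi : ∀ i ∈ I, |2*θ*(i:ℝ)| ≤ 3*m*θ := by
    intro i hi
    rw [hI, Finset.mem_Icc] at hi
    have hiK : |(i:ℝ)| ≤ (K:ℝ) := by
      rw [abs_le]
      constructor
      · exact_mod_cast hi.1
      · exact_mod_cast hi.2
    have h2K : (2*K : ℝ) ≤ 3*(m:ℝ) := by
      have : 2 * K ≤ 3 * m := by omega
      exact_mod_cast this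
    have : |2*θ*(i:ℝ)| = 2*θ*|(i:ℝ)| := by
      rw [abs_mul, abs_of_pos (by positivity : (0:ℝ) < 2*θ)]
    rw [this]
    nlinarith
  -- counting the bad candidates for each obstacle k
  have hbadcard : ∀ k : Fin n,
      (I.filter (fun i => Real.cos θ * ‖v k‖ < |⟪c i, v k⟫|)).card ≤ 3 := by
    intro k
    have hvkn : (0:ℝ) < ‖v k‖ := norm_pos_iff.2 (hv k)
    have hcosθ : (0:ℝ) < Real.cos θ := Real.cos_pos_of_mem_Ioo ⟨by linarith, hθ2⟩
    set a : ℝ := ⟪u, v k⟫ with ha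
    set b : ℝ := ⟪e, v k⟫ with hb
    have hinner : ∀ i : ℤ, ⟪c i, v k⟫ = Real.cos (2*θ*i) * a + Real.sin (2*θ*i) * b :=
      fun i => inner_circ _ _
    by_cases hz0 : a = 0 ∧ b = 0
    · have : I.filter (fun i => Real.cos θ * ‖v k‖ < |⟪c i, v k⟫|) = ∅ := by
        rw [Finset.filter_eq_empty_iff]
        intro i _
        rw [hinner i, hz0.1, hz0.2]
        simp only [mul_zero, add_zero, abs_zero, not_lt]
        positivity
      rw [this]; simp
    · set z : ℂ := if 0 ≤ a then ⟨a, b⟩ else ⟨-a, -b⟩ with hzdef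
      have hzne : z ≠ 0 := by
        rw [hzdef]
        split_ifs <;>
        · simp only [ne_eq, Complex.ext_iff, Complex.zero_re, Complex.zero_im]
          intro hcontra
          apply hz0
          constructor <;> [linarith [hcontra.1]; linarith [hcontra.2]]
      have hzre : 0 ≤ z.re := by
        rw [hzdef]; split_ifs with h
        · simpa using h
        · push_neg at h
          have : (0:ℝ) ≤ -a := by linarith
          simpa using this
      have hzabs : (0:ℝ) < ‖z‖ := by
        simpa using norm_pos_iff.mpr hzne
      set ψ : ℝ := Complex.arg z with hψdef
      have hψ : |ψ| ≤ π/2 := Complex.abs_arg_le_pi_div_two_iff.2 hzre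
      have habs : ∀ x : ℝ, |Real.cos x * a + Real.sin x * b|
          = ‖z‖ * |Real.cos (x - ψ)| := by
        intro x
        have hcψ : Real.cos ψ = z.re / ‖z‖ := Complex.cos_arg hzne
        have hsψ : Real.sin ψ = z.im / ‖z‖ := Complex.sin_arg z
        have hre : z.re = a ∨ z.re = -a := by
          rw [hzdef]; split_ifs <;> simp
        have him : (z.re = a ∧ z.im = b) ∨ (z.re = -a ∧ z.im = -b) := by
          rw [hzdef]; split_ifs <;> simp
        have hkey : ‖z‖ * Real.cos (x - ψ) = Real.cos x * z.re + Real.sin x * z.im := by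
          rw [Real.cos_sub, hcψ, hsψ]
          field_simp
        rcases him with ⟨h1, h2⟩ | ⟨h1, h2⟩
        · rw [← h1, ← h2, ← hkey, abs_mul, abs_of_pos hzabs]
        · have : Real.cos x * a + Real.sin x * b = -(Real.cos x * z.re + Real.sin x * z.im) := by
            rw [h1, h2]; ring
          rw [this, abs_neg, ← hkey, abs_mul, abs_of_pos hzabs]
      have hrle : ‖z‖ ≤ ‖v k‖ := by
        have h1 : ‖z‖^2 = a^2 + b^2 := by
          rw [← Complex.normSq_eq_norm_sq]
          rw [hzdef]
          split_ifs <;> simp [Complex.normSq_mk] <;> ring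
        have h2 : a^2 + b^2 ≤ ‖v k‖^2 := proj_le hu1 he1 hue (v k)
        nlinarith [norm_nonneg z, norm_nonneg (v k)]
      -- the injection into Icc (-1) 1
      have hcard3 : (Finset.Icc (-1:ℤ) 1).card = 3 := by decide
      rw [← hcard3]
      have hmaps : ∀ i ∈ I.filter (fun i => Real.cos θ * ‖v k‖ < |⟪c i, v k⟫|),
          round ((2*θ*(i:ℝ) - ψ)/π) ∈ Finset.Icc (-1:ℤ) 1 := by
        intro i hi
        rw [Finset.mem_filter] at hi
        obtain ⟨hiI, hibad⟩ := hi
        rw [hinner i] at hibad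
        have hcc : Real.cos θ < |Real.cos (2*θ*i - ψ)| := by
          have h1 := habs (2*θ*i)
          have h2 : Real.cos θ * ‖v k‖ < ‖z‖ * |Real.cos (2*θ*i - ψ)| := by
            rw [← h1]; exact hibad
          by_contra hcon
          push_neg at hcon
          have : ‖z‖ * |Real.cos (2*θ*i - ψ)| ≤ ‖v k‖ * Real.cos θ := by
            calc ‖z‖ * |Real.cos (2*θ*i - ψ)| ≤ ‖v k‖ * |Real.cos (2*θ*i - ψ)| := by
                  apply mul_le_mul_of_nonneg_right hrle (abs_nonneg _)
              _ ≤ ‖v k‖ * Real.cos θ := by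
                  apply mul_le_mul_of_nonneg_left hcon (norm_nonneg _)
          linarith [this, h2, mul_comm (Real.cos θ) ‖v k‖]
        obtain ⟨hnear, hbnd⟩ := round_near hθ0 hθ2 hcc
        rw [Finset.mem_Icc]
        have habs_x : |2*θ*(i:ℝ) - ψ| ≤ π + π/2 := by
          have := hphi i hiI
          have h1 : |2*θ*(i:ℝ)| ≤ π := le_trans this h3m
          calc |2*θ*(i:ℝ) - ψ| ≤ |2*θ*(i:ℝ)| + |ψ| := abs_sub _ _
            _ ≤ π + π/2 := by linarith
        have hNπ : |((round ((2*θ*(i:ℝ) - ψ)/π) : ℤ) : ℝ) * π| < 2*π := by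
          have h2 : ((round ((2*θ*(i:ℝ) - ψ)/π) : ℤ) : ℝ) * π
              = (2*θ*(i:ℝ) - ψ) - (2*θ*(i:ℝ) - ψ - ((round ((2*θ*(i:ℝ) - ψ)/π) : ℤ) : ℝ) * π) := by
            ring
          have htri : |((round ((2*θ*(i:ℝ) - ψ)/π) : ℤ) : ℝ) * π|
              ≤ |2*θ*(i:ℝ) - ψ| + |2*θ*(i:ℝ) - ψ - ((round ((2*θ*(i:ℝ) - ψ)/π) : ℤ) : ℝ) * π| := by
            conv_lhs => rw [h2]
            exact abs_sub _ _
          linarith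
        have h6 : |((round ((2*θ*(i:ℝ) - ψ)/π) : ℤ) : ℝ)| * π < 2*π := by
          rwa [abs_mul, abs_of_pos hπ] at hNπ
        have h7 : |((round ((2*θ*(i:ℝ) - ψ)/π) : ℤ) : ℝ)| < 2 := by nlinarith
        have h8 : |(round ((2*θ*(i:ℝ) - ψ)/π) : ℤ)| < 2 := by exact_mod_cast h7
        rw [abs_lt] at h8
        omega
      have hinj : Set.InjOn (fun i : ℤ => round ((2*θ*(i:ℝ) - ψ)/π))
          (I.filter (fun i => Real.cos θ * ‖v k‖ < |⟪c i, v k⟫|)) := by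
        intro i hi j hj hij
        simp only [Finset.coe_filter, Set.mem_setOf_eq] at hi hj
        simp only at hij
        obtain ⟨hiI, hibad⟩ := hi
        obtain ⟨hjI, hjbad⟩ := hj
        rw [hinner i] at hibad
        rw [hinner j] at hjbad
        have hcci : Real.cos θ < |Real.cos (2*θ*i - ψ)| := by
          have h1 := habs (2*θ*i)
          by_contra hcon
          push_neg at hcon
          have : |Real.cos (2*θ*(i:ℝ)) * a + Real.sin (2*θ*(i:ℝ)) * b| ≤ ‖v k‖ * Real.cos θ := by
            rw [h1]
            calc ‖z‖ * |Real.cos (2*θ*i - ψ)| ≤ ‖v k‖ * |Real.cos (2*θ*i - ψ)| :=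
                  mul_le_mul_of_nonneg_right hrle (abs_nonneg _)
              _ ≤ ‖v k‖ * Real.cos θ := mul_le_mul_of_nonneg_left hcon (norm_nonneg _)
          linarith [mul_comm (Real.cos θ) ‖v k‖, hibad, this]
        have hccj : Real.cos θ < |Real.cos (2*θ*j - ψ)| := by
          have h1 := habs (2*θ*j)
          by_contra hcon
          push_neg at hcon
          have : |Real.cos (2*θ*(j:ℝ)) * a + Real.sin (2*θ*(j:ℝ)) * b| ≤ ‖v k‖ * Real.cos θ := by
            rw [h1]
            calc ‖z‖ * |Real.cos (2*θ*j - ψ)| ≤ ‖v k‖ * |Real.cos (2*θ*j - ψ)| :=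
                  mul_le_mul_of_nonneg_right hrle (abs_nonneg _)
              _ ≤ ‖v k‖ * Real.cos θ := mul_le_mul_of_nonneg_left hcon (norm_nonneg _)
          linarith [mul_comm (Real.cos θ) ‖v k‖, hjbad, this]
        obtain ⟨hni, _⟩ := round_near hθ0 hθ2 hcci
        obtain ⟨hnj, _⟩ := round_near hθ0 hθ2 hccj
        rw [hij] at hni
        have hdiff : |2*θ*(i:ℝ) - 2*θ*(j:ℝ)| < 2*θ := by
          have h1 := abs_sub_lt_iff.1 hni
          have h2 := abs_sub_lt_iff.1 hnj
          rw [abs_sub_lt_iff]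
          constructor <;> linarith [h1.1, h1.2, h2.1, h2.2]
        have : 2*θ*|(i:ℝ) - (j:ℝ)| < 2*θ := by
          rwa [show 2*θ*(i:ℝ) - 2*θ*(j:ℝ) = 2*θ*((i:ℝ)-(j:ℝ)) by ring, abs_mul,
            abs_of_pos (by positivity : (0:ℝ) < 2*θ)] at hdiff
        have hij1 : |(i:ℝ) - (j:ℝ)| < 1 := by nlinarith
        have h9 : ((i - j : ℤ) : ℝ) = (i:ℝ) - (j:ℝ) := by push_cast; ring
        have h10 : |((i - j : ℤ) : ℝ)| < 1 := by rw [h9]; exact hij1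
        have h11 : |i - j| < 1 := by exact_mod_cast h10
        rw [abs_lt] at h11
        omega
      exact Finset.card_le_card_of_injOn _ hmaps hinj
  -- find a good candidate
  have hgood : ∃ i ∈ I, ∀ k : Fin n, |⟪c i, v k⟫| ≤ Real.cos θ * ‖v k‖ := by
    by_contra hcon
    push_neg at hcon
    have hsub : I ⊆ Finset.univ.biUnion
        (fun k : Fin n => I.filter (fun i => Real.cos θ * ‖v k‖ < |⟪c i, v k⟫|)) := by
      intro i hi
      obtain ⟨k, hk⟩ := hcon i hi
      exact Finset.mem_biUnion.2 ⟨k, Finset.mem_univ _, Finset.mem_filter.2 ⟨hi, hk⟩⟩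
    have h1 := Finset.card_le_card hsub
    have h2 := Finset.card_biUnion_le (s := (Finset.univ : Finset (Fin n)))
      (t := fun k : Fin n => I.filter (fun i => Real.cos θ * ‖v k‖ < |⟪c i, v k⟫|))
    have h3 : ∑ k : Fin n, (I.filter (fun i => Real.cos θ * ‖v k‖ < |⟪c i, v k⟫|)).card
        ≤ 3 * n := by
      calc ∑ k : Fin n, (I.filter (fun i => Real.cos θ * ‖v k‖ < |⟪c i, v k⟫|)).card
          ≤ ∑ _k : Fin n, 3 := Finset.sum_le_sum (fun k _ => hbadcard k)
        _ = 3 * n := by simp [mul_comm]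
    rw [hIcard] at h1
    have : 2 * K + 1 ≤ 3 * n := le_trans h1 (le_trans h2 h3)
    omega
  obtain ⟨i, hiI, higood⟩ := hgood
  refine ⟨‖u'‖ • c i, ?_, ?_, ?_, ?_⟩
  · intro hcontra
    have : ‖‖u'‖ • c i‖ = ‖u'‖ := by
      rw [norm_smul, Real.norm_eq_abs, abs_of_pos hu'n, hcnorm i, mul_one]
    rw [hcontra, norm_zero] at this
    exact (ne_of_gt hu'n) this.symm
  · rw [norm_smul, Real.norm_eq_abs, abs_of_pos hu'n, hcnorm i, mul_one]
  · intro k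
    have hwnorm : ‖‖u'‖ • c i‖ = ‖u'‖ := by
      rw [norm_smul, Real.norm_eq_abs, abs_of_pos hu'n, hcnorm i, mul_one]
    have hw0 : ‖u'‖ • c i ≠ 0 := by
      intro hcontra
      rw [hcontra, norm_zero] at hwnorm
      exact (ne_of_gt hu'n) hwnorm.symm
    apply le_rho (le_of_lt hθ0) (by linarith) hw0 (hv k)
    rw [real_inner_smul_left, hwnorm, abs_mul, abs_of_pos hu'n]
    calc ‖u'‖ * |⟪c i, v k⟫| ≤ ‖u'‖ * (Real.cos θ * ‖v k‖) :=
          mul_le_mul_of_nonneg_left (higood k) (norm_nonneg _)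
      _ = Real.cos θ * (‖u'‖ * ‖v k‖) := by ring
  · have hwnorm : ‖‖u'‖ • c i‖ = ‖u'‖ := by
      rw [norm_smul, Real.norm_eq_abs, abs_of_pos hu'n, hcnorm i, mul_one]
    have hinu : ⟪c i, u'⟫ = Real.cos (2*θ*i) * ‖u'‖ := by
      have h1 : ⟪c i, u'⟫ = Real.cos (2*θ*i) * ⟪u, u'⟫ + Real.sin (2*θ*i) * ⟪e, u'⟫ :=
        inner_circ _ _
      have h2 : ⟪u, u'⟫ = ‖u'‖ := by
        rw [hu_def, real_inner_smul_left, real_inner_self_eq_norm_mul_norm]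
        field_simp
      have h3 : ⟪e, u'⟫ = 0 := by
        have h4 : ⟪u, e⟫ = 0 := hue
        have h5 : u' = ‖u'‖ • u := by
          rw [hu_def, smul_smul, mul_inv_cancel₀ (ne_of_gt hu'n), one_smul]
        rw [h5, real_inner_smul_right, real_inner_comm u e, h4, mul_zero]
      rw [h1, h2, h3, mul_zero, add_zero]
    rw [real_inner_smul_left, hinu, hwnorm]
    have hsimp : ‖u'‖ * (Real.cos (2*θ*i) * ‖u'‖) / (‖u'‖ * ‖u'‖) = Real.cos (2*θ*i) := by
      field_simp
    rw [hsimp]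
    have hle := hphi i hiI
    rcases le_or_gt 0 (2*θ*(i:ℝ)) with hpos | hneg
    · rw [Real.arccos_cos hpos (by rw [abs_of_nonneg hpos] at hle; linarith)]
      rwa [abs_of_nonneg hpos] at hle
    · rw [← Real.cos_neg, Real.arccos_cos (by linarith) (by rw [abs_of_neg hneg] at hle; linarith)]
      rw [abs_of_neg hneg] at hle
      linarith

end Stmt17Aux

set_option maxHeartbeats 1000000 in
/-- paper's Lemma 10. For `θ ∈ (0, π/2)` and
`m ≤ 2(⌊(π/2 − θ)/θ⌋ + 1)`, any nonzero vectors `w'_1,…,w'_m ∈ ℝ^d` (`d ≥ 2`) can be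
perturbed to nonzero vectors `w_1,…,w_m` with pairwise nonobtuse angles at least `θ`,
the same norms, and ordinary angle at most `θ' = min(3mθ, π)` to the original vectors. -/
theorem stmt_17 {d : ℕ} (hd : 2 ≤ d) (θ : ℝ) (hθ : θ ∈ Set.Ioo 0 (Real.pi / 2))
    (m : ℕ) (hm : m ≤ 2 * (Nat.floor ((Real.pi / 2 - θ) / θ) + 1))
    (w' : Fin m → EuclideanSpace ℝ (Fin d)) (hw' : ∀ j, w' j ≠ 0) :
    ∃ w : Fin m → EuclideanSpace ℝ (Fin d),
      (∀ j, w j ≠ 0) ∧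
      (∀ j k, j ≠ k → θ ≤ rho (w j) (w k)) ∧
      (∀ j, ‖w j‖ = ‖w' j‖) ∧
      (∀ j, Real.arccos (⟪w j, w' j⟫ / (‖w j‖ * ‖w' j‖)) ≤ min (3 * m * θ) Real.pi) := by
  obtain ⟨hθ0, hθ2⟩ := hθ
  have hπ := Real.pi_pos
  have hmθ : (m:ℝ) * θ ≤ Real.pi := by
    have hx0 : (0:ℝ) ≤ (Real.pi/2 - θ)/θ := div_nonneg (by linarith) (le_of_lt hθ0)
    have hfl : (Nat.floor ((Real.pi/2 - θ)/θ) : ℝ) ≤ (Real.pi/2 - θ)/θ := Nat.floor_le hx0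
    have hmr : (m:ℝ) ≤ 2*((Real.pi/2 - θ)/θ + 1) := by
      have h1 : (m:ℝ) ≤ 2*((Nat.floor ((Real.pi/2 - θ)/θ) : ℝ) + 1) := by exact_mod_cast hm
      linarith
    have h2 := mul_le_mul_of_nonneg_right hmr (le_of_lt hθ0)
    have hexp : 2*((Real.pi/2 - θ)/θ + 1)*θ = Real.pi := by
      field_simp
      ring
    linarith
  rcases le_or_gt (3*(m:ℝ)*θ) Real.pi with hcase | hcase
  · -- greedy perturbation case
    have hind : ∀ n : ℕ, n ≤ m → ∃ w : Fin m → EuclideanSpace ℝ (Fin d),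
        (∀ j, w j ≠ 0) ∧ (∀ j, ‖w j‖ = ‖w' j‖) ∧
        (∀ j, Real.arccos (⟪w j, w' j⟫ / (‖w j‖ * ‖w' j‖)) ≤ 3*(m:ℝ)*θ) ∧
        (∀ j k : Fin m, (j:ℕ) < (k:ℕ) → (k:ℕ) < n → θ ≤ rho (w j) (w k)) := by
      intro n
      induction n with
      | zero =>
        intro _
        refine ⟨w', hw', fun j => rfl, ?_, ?_⟩
        · intro j
          have hn0 : (0:ℝ) < ‖w' j‖ := norm_pos_iff.2 (hw' j)
          have h1 : ⟪w' j, w' j⟫ = ‖w' j‖ * ‖w' j‖ := real_inner_self_eq_norm_mul_norm _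
          rw [h1, div_self (by positivity), Real.arccos_one]
          positivity
        · intro j k _ hk
          exact absurd hk (Nat.not_lt_zero _)
      | succ n ih =>
        intro hn1
        obtain ⟨w, hw0, hwn, hwa, hwp⟩ := ih (by omega)
        have hnm : n < m := by omega
        obtain ⟨wn, hwn0, hwnn, hwnr, hwna⟩ := Stmt17Aux.step hd hθ0 hθ2 hcase hnm
          (w' ⟨n, hnm⟩) (hw' _) (fun k => w ⟨(k:ℕ), lt_trans k.2 hnm⟩) (fun k => hw0 _)
        refine ⟨Function.update w ⟨n, hnm⟩ wn, ?_, ?_, ?_, ?_⟩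
        · intro j
          rcases eq_or_ne j ⟨n, hnm⟩ with h | h
          · rw [h, Function.update_self]; exact hwn0
          · rw [Function.update_of_ne h]; exact hw0 j
        · intro j
          rcases eq_or_ne j ⟨n, hnm⟩ with h | h
          · rw [h, Function.update_self]; exact hwnn
          · rw [Function.update_of_ne h]; exact hwn j
        · intro j
          rcases eq_or_ne j ⟨n, hnm⟩ with h | h
          · rw [h, Function.update_self]; exact hwna
          · rw [Function.update_of_ne h]; exact hwa j
        · intro j k hjk hk1
          rcases eq_or_ne (k:ℕ) n with hkn | hkn
          · have hkeq : k = ⟨n, hnm⟩ := Fin.ext hkn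
            have hjn : (j:ℕ) < n := by omega
            have hjne : j ≠ ⟨n, hnm⟩ := by
              intro hcon
              rw [hcon] at hjk
              simp at hjk
              omega
            rw [hkeq, Function.update_self, Function.update_of_ne hjne]
            rw [Stmt17Aux.rho_comm]
            have h2 : (⟨(j:ℕ), lt_trans hjn hnm⟩ : Fin m) = j := Fin.ext rfl
            rw [← h2]
            exact hwnr ⟨(j:ℕ), hjn⟩
          · have hkln : (k:ℕ) < n := by omega
            have hjne : j ≠ ⟨n, hnm⟩ := by
              intro hcon
              have : (j:ℕ) = n := by rw [hcon]
              omega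
            have hkne : k ≠ ⟨n, hnm⟩ := by
              intro hcon
              have : (k:ℕ) = n := by rw [hcon]
              omega
            rw [Function.update_of_ne hjne, Function.update_of_ne hkne]
            exact hwp j k hjk hkln
    obtain ⟨w, hw0, hwn, hwa, hwp⟩ := hind m le_rfl
    refine ⟨w, hw0, ?_, hwn, ?_⟩
    · intro j k hjk
      rcases lt_trichotomy (j:ℕ) (k:ℕ) with h | h | h
      · exact hwp j k h k.2
      · exact absurd (Fin.ext h) hjk
      · rw [Stmt17Aux.rho_comm]
        exact hwp k j h j.2
    · intro j
      have : min (3 * (m:ℝ) * θ) Real.pi = 3 * (m:ℝ) * θ := min_eq_left hcase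
      rw [this]
      exact hwa j
  · -- fixed construction case
    have hmin : min (3 * (m:ℝ) * θ) Real.pi = Real.pi := min_eq_right (le_of_lt hcase)
    set e0 : EuclideanSpace ℝ (Fin d) := EuclideanSpace.single ⟨0, by omega⟩ (1:ℝ) with he0def
    set e1 : EuclideanSpace ℝ (Fin d) := EuclideanSpace.single ⟨1, by omega⟩ (1:ℝ) with he1def
    have he0 : ‖e0‖ = 1 := by rw [he0def, EuclideanSpace.norm_single]; norm_num
    have he1 : ‖e1‖ = 1 := by rw [he1def, EuclideanSpace.norm_single]; norm_num
    have he01 : ⟪e0, e1⟫ = 0 := by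
      rw [he0def, he1def, EuclideanSpace.inner_single_left]
      norm_num [EuclideanSpace.single_apply, Fin.ext_iff]
    set c : ℕ → EuclideanSpace ℝ (Fin d) :=
      fun j => Real.cos (j*θ) • e0 + Real.sin (j*θ) • e1 with hc
    have hcnorm : ∀ j, ‖c j‖ = 1 := fun j => Stmt17Aux.norm_circ he0 he1 he01 _
    have hc0 : ∀ j, c j ≠ 0 := by
      intro j hcon
      have := hcnorm j
      rw [hcon, norm_zero] at this
      norm_num at this
    have hwnorm : ∀ j : Fin m, ‖‖w' j‖ • c (j:ℕ)‖ = ‖w' j‖ := by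
      intro j
      have hn0 : (0:ℝ) < ‖w' j‖ := norm_pos_iff.2 (hw' j)
      rw [norm_smul, Real.norm_eq_abs, abs_of_pos hn0, hcnorm, mul_one]
    refine ⟨fun j => ‖w' j‖ • c (j:ℕ), ?_, ?_, ?_, ?_⟩
    · intro j
      show ‖w' j‖ • c (j:ℕ) ≠ 0
      have hn0 : (0:ℝ) < ‖w' j‖ := norm_pos_iff.2 (hw' j)
      intro hcon
      have h1 := hwnorm j
      rw [hcon, norm_zero] at h1
      exact (ne_of_gt hn0) h1.symm
    · have hpair : ∀ j k : Fin m, (j:ℕ) < (k:ℕ) → θ ≤ rho (‖w' j‖ • c (j:ℕ)) (‖w' k‖ • c (k:ℕ)) := by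
        intro j k hjk
        have hnj : (0:ℝ) < ‖w' j‖ := norm_pos_iff.2 (hw' j)
        have hnk : (0:ℝ) < ‖w' k‖ := norm_pos_iff.2 (hw' k)
        rw [Stmt17Aux.rho_smul_smul hnj hnk]
        apply Stmt17Aux.le_rho (le_of_lt hθ0) (by linarith) (hc0 _) (hc0 _)
        rw [hcnorm, hcnorm, mul_one, mul_one]
        have hin : ⟪c ((j:Fin m):ℕ), c ((k:Fin m):ℕ)⟫
            = Real.cos ((((j:ℕ)):ℝ)*θ - (((k:ℕ)):ℝ)*θ) := by
          rw [hc]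
          exact Stmt17Aux.inner_circ_circ he0 he1 he01 _ _
        rw [hin]
        have hjk' : (((j:ℕ)):ℝ) + 1 ≤ (((k:ℕ)):ℝ) := by exact_mod_cast hjk
        have hk1 : (((k:ℕ)):ℝ) + 1 ≤ (m:ℝ) := by exact_mod_cast k.2
        have hj0 : (0:ℝ) ≤ (((j:ℕ)):ℝ) := Nat.cast_nonneg _
        set t : ℝ := (((k:ℕ)):ℝ)*θ - (((j:ℕ)):ℝ)*θ with ht
        have h1 : Real.cos ((((j:ℕ)):ℝ)*θ - (((k:ℕ)):ℝ)*θ) = Real.cos t := by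
          rw [← Real.cos_neg]
          congr 1
          rw [ht]
          ring
        rw [h1]
        have hθt : θ ≤ t := by
          rw [ht]
          nlinarith
        have htπ : t ≤ Real.pi - θ := by
          rw [ht]
          nlinarith
        rw [abs_le]
        constructor
        · have h2 := Real.cos_le_cos_of_nonneg_of_le_pi (by linarith : (0:ℝ) ≤ t)
            (by linarith : Real.pi - θ ≤ Real.pi) htπ
          rw [Real.cos_pi_sub] at h2
          linarith
        · exact Real.cos_le_cos_of_nonneg_of_le_pi (le_of_lt hθ0) (by linarith) hθt
      intro j k hjk
      show θ ≤ rho (‖w' j‖ • c (j:ℕ)) (‖w' k‖ • c (k:ℕ))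
      rcases lt_trichotomy (j:ℕ) (k:ℕ) with h | h | h
      · exact hpair j k h
      · exact absurd (Fin.ext h) hjk
      · rw [Stmt17Aux.rho_comm]
        exact hpair k j h
    · intro j
      exact hwnorm j
    · intro j
      rw [hmin]
      exact Real.arccos_le_pi _
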